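/- Let n ≥ 3 be an integer, m = n − 1, ρ < 1/(2m), and let (x, y) be a solution of the system (S_ρ) on ℝ such that for all t ∈ ℝ: 0 < x(t) < 1, x′(t) < 0, y(t) > 0, y′(t) > 0, and (x(t), y(t)) → (1, 0) as t → −∞. Then x(t)·y(t) → (n−2)(1−(n−1)ρ) and y′(t) → (n−2)(1−2(n−1)ρ) as t → +∞. -/

import Mathlib

open Filter Real

lemma tendsto_zero_of_deriv_le_aux {w : ℝ → ℝ} (hw : Differentiable ℝ w) (hpos : ∀ t, 0 < w t)
    (hineq : ∀ ε : ℝ, 0 < ε → ∃ T : ℝ, ∀ t ≥ T, deriv w t ≤ -w t + ε) :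
    Filter.Tendsto w Filter.atTop (nhds 0) := by
  rw [Metric.tendsto_atTop]
  intro ε hε
  obtain ⟨T, hT⟩ := hineq (ε / 4) (by positivity)
  have hg : ∀ t : ℝ, HasDerivAt (fun t => Real.exp t * (w t - ε / 4))
      (Real.exp t * (w t - ε / 4) + Real.exp t * deriv w t) t := fun t =>
    (Real.hasDerivAt_exp t).mul ((hw t).hasDerivAt.sub_const _)
  have hganti : AntitoneOn (fun t => Real.exp t * (w t - ε / 4)) (Set.Ici T) := by
    apply antitoneOn_of_deriv_nonpos (convex_Ici T)
    · exact (Real.continuous_exp.mul ((hw.continuous).sub continuous_const)).continuousOn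
    · exact fun t _ => (hg t).differentiableAt.differentiableWithinAt
    · intro t ht
      rw [interior_Ici] at ht
      rw [(hg t).deriv]
      have h1 := hT t (le_of_lt ht)
      nlinarith [Real.exp_pos t]
  refine ⟨max T (T - Real.log (ε / (4 * w T))), fun t ht => ?_⟩
  have htT : T ≤ t := le_trans (le_max_left _ _) ht
  have h1 := hganti Set.self_mem_Ici (Set.mem_Ici.2 htT) htT
  have h2 : Real.exp (T - t) ≤ ε / (4 * w T) := by
    rw [← Real.exp_log (div_pos hε (by nlinarith [hpos T]))]
    apply Real.exp_le_exp.2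
    have := le_trans (le_max_right _ _) ht
    linarith
  have h3 : Real.exp T * w T ≤ Real.exp t * (ε / 4) := by
    rw [Real.exp_sub, div_le_div_iff₀ (Real.exp_pos t) (by nlinarith [hpos T])] at h2
    nlinarith [Real.exp_pos t, hpos T]
  have h5 : w t - ε / 4 ≤ ε / 4 := by
    have he := Real.exp_pos t
    have hTe := Real.exp_pos T
    nlinarith [hpos T]
  rw [Real.dist_eq, sub_zero, abs_of_pos (hpos t)]
  linarith

/-- `IsEinsteinSystemSol m ρ x y` means the pair of differentiable functions `(x, y)` solves
the planar system `(S_ρ)`: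
`(1 − 2mρ)·x′ = (m−1)(1−mρ)(1 − x²) − x·y` and
`(1 − 2mρ)·y′ = −m(m−1)(1−(m+1)ρ)(1 − x²) + (1 + m − 4mρ)·x·y`,
arising from rotationally symmetric gradient steady ρ-Einstein solitons. -/
def IsEinsteinSystemSol (m ρ : ℝ) (x y : ℝ → ℝ) : Prop :=
  Differentiable ℝ x ∧ Differentiable ℝ y ∧
    (∀ t : ℝ, (1 - 2 * m * ρ) * deriv x t =
      (m - 1) * (1 - m * ρ) * (1 - x t ^ 2) - x t * y t) ∧
    (∀ t : ℝ, (1 - 2 * m * ρ) * deriv y t =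
      -(m * (m - 1) * (1 - (m + 1) * ρ) * (1 - x t ^ 2)) + (1 + m - 4 * m * ρ) * x t * y t)

set_option maxHeartbeats 1000000

/-- Intermediate step of Proposition 4.4: along the soliton trajectory (`ρ < 1/(2m)`),
`x·y → (n−2)(1−(n−1)ρ)` and `y′ → (n−2)(1−2(n−1)ρ)` as `t → +∞`. -/
theorem soliton_trajectory_product_limits (n : ℕ) (hn : 3 ≤ n) (m ρ : ℝ)
    (hm : m = (n : ℝ) - 1) (hρ : ρ < 1 / (2 * m)) (x y : ℝ → ℝ)
    (hsol : IsEinsteinSystemSol m ρ x y)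
    (hx : ∀ t : ℝ, 0 < x t ∧ x t < 1) (hx' : ∀ t : ℝ, deriv x t < 0)
    (hy : ∀ t : ℝ, 0 < y t) (hy' : ∀ t : ℝ, 0 < deriv y t)
    (hlim : Filter.Tendsto (fun t => (x t, y t)) Filter.atBot (nhds (1, 0))) :
    Filter.Tendsto (fun t => x t * y t) Filter.atTop
        (nhds (((n : ℝ) - 2) * (1 - ((n : ℝ) - 1) * ρ))) ∧
      Filter.Tendsto (fun t => deriv y t) Filter.atTop
        (nhds (((n : ℝ) - 2) * (1 - 2 * ((n : ℝ) - 1) * ρ))) := by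
  obtain ⟨hdx, hdy, hX, hY⟩ := hsol
  have hm2 : (2:ℝ) ≤ m := by
    rw [hm]
    have : (3:ℝ) ≤ (n:ℝ) := by exact_mod_cast hn
    linarith
  have hE : 0 < 1 - 2 * m * ρ := by
    rw [lt_div_iff₀ (by linarith : (0:ℝ) < 2 * m)] at hρ
    nlinarith
  have hApos : 0 < (m - 1) * (1 - m * ρ) := by nlinarith
  have hCpos : 0 < 1 + m - 4 * m * ρ := by nlinarith
  have hwpos : ∀ t, 0 < x t * y t - (m - 1) * (1 - m * ρ) * (1 - x t ^ 2) := by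
    intro t
    have h1 := mul_neg_of_pos_of_neg hE (hx' t)
    rw [hX t] at h1
    linarith
  have hwderiv : ∀ t, deriv (fun s => x s * y s - (m - 1) * (1 - m * ρ) * (1 - x s ^ 2)) t
      = deriv x t * y t + x t * deriv y t + (m - 1) * (1 - m * ρ) * (2 * x t * deriv x t) := by
    intro t
    rw [HasDerivAt.deriv (f := fun s => x s * y s - (m - 1) * (1 - m * ρ) * (1 - x s ^ 2)) (((hdx t).hasDerivAt.mul (hdy t).hasDerivAt).sub
        (((hasDerivAt_const t (1:ℝ)).sub ((hdx t).hasDerivAt.pow 2)).const_mul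
          ((m - 1) * (1 - m * ρ))))]
    push_cast
    ring
  have keyw : ∀ t, (1 - 2 * m * ρ) *
      deriv (fun s => x s * y s - (m - 1) * (1 - m * ρ) * (1 - x s ^ 2)) t
      = -((y t + (2 * ((m - 1) * (1 - m * ρ)) - (1 + m - 4 * m * ρ)) * x t) *
          (x t * y t - (m - 1) * (1 - m * ρ) * (1 - x t ^ 2)))
        + (m - 1) * (1 - 2 * m * ρ) ^ 2 * (x t * (1 - x t ^ 2)) := by
    intro t
    rw [hwderiv t]
    linear_combination (y t + 2 * ((m - 1) * (1 - m * ρ)) * x t) * hX t + x t * hY t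
  have keyy : ∀ t, deriv y t =
      ((1 + m - 4 * m * ρ) * (x t * y t - (m - 1) * (1 - m * ρ) * (1 - x t ^ 2))
        + (m - 1) * (1 - 2 * m * ρ) ^ 2 * (1 - x t ^ 2)) / (1 - 2 * m * ρ) := by
    intro t
    rw [eq_div_iff hE.ne']
    linear_combination hY t
  have hxanti : StrictAnti x := strictAnti_of_deriv_neg hx'
  -- lower bound on deriv y on [0, ∞)
  have hydlb : ∀ t, 0 ≤ t → (m - 1) * (1 - 2 * m * ρ) * (1 - x 0 ^ 2) ≤ deriv y t := by
    intro t ht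
    have hxle : x t ≤ x 0 := hxanti.antitone ht
    have hx0 := hx 0
    have hxt := hx t
    rw [keyy t, le_div_iff₀ hE]
    nlinarith [mul_pos hCpos (hwpos t),
      mul_nonneg (mul_nonneg (show (0:ℝ) ≤ m - 1 by linarith) (sq_nonneg (1 - 2 * m * ρ)))
        (show (0:ℝ) ≤ x 0 ^ 2 - x t ^ 2 by nlinarith [hxt.1])]
  have hymin : ∀ t, 0 ≤ t → y 0 + (m - 1) * (1 - 2 * m * ρ) * (1 - x 0 ^ 2) * t ≤ y t := by
    intro t ht
    have hmono : MonotoneOn (fun s => y s - (m - 1) * (1 - 2 * m * ρ) * (1 - x 0 ^ 2) * s)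
        (Set.Ici 0) := by
      apply monotoneOn_of_deriv_nonneg (convex_Ici 0)
      · exact (hdy.continuous.sub (continuous_const.mul continuous_id)).continuousOn
      · exact fun s _ => ((hdy s).sub ((differentiable_id.const_mul _) s)).differentiableWithinAt
      · intro s hs
        rw [interior_Ici] at hs
        rw [HasDerivAt.deriv (f := fun s => y s - (m - 1) * (1 - 2 * m * ρ) * (1 - x 0 ^ 2) * s) ((hdy s).hasDerivAt.sub ((hasDerivAt_id' s).const_mul ((m - 1) * (1 - 2 * m * ρ) * (1 - x 0 ^ 2))))]
        have := hydlb s (le_of_lt hs)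
        nlinarith
    have h := hmono Set.self_mem_Ici (Set.mem_Ici.2 ht) ht
    simp only [mul_zero, sub_zero] at h
    linarith
  have hc0 : 0 < (m - 1) * (1 - 2 * m * ρ) * (1 - x 0 ^ 2) := by
    have hx0 := hx 0
    exact mul_pos (mul_pos (by linarith) hE) (by nlinarith [hx0.1, hx0.2])
  have hytop : Tendsto y atTop atTop := by
    apply tendsto_atTop_mono' atTop (eventually_atTop.2 ⟨0, hymin⟩)
    exact tendsto_atTop_add_const_left _ (y 0) (Tendsto.const_mul_atTop hc0 tendsto_id)
  have hbdd : BddBelow (Set.range x) := ⟨0, by rintro v ⟨t, rfl⟩; exact (hx t).1.le⟩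
  have hxInf : Tendsto x atTop (nhds (⨅ t, x t)) := tendsto_atTop_ciInf hxanti.antitone hbdd
  have hL0 : (⨅ t, x t) = 0 := by
    by_contra hL
    have hLpos : 0 < ⨅ t, x t := lt_of_le_of_ne (le_ciInf fun t => (hx t).1.le) (Ne.symm hL)
    obtain ⟨T, hT⟩ := eventually_atTop.1 (hytop.eventually_ge_atTop
      (((m - 1) * (1 - m * ρ) + (1 - 2 * m * ρ)) / (⨅ t, x t)))
    have hd1 : ∀ t, T ≤ t → deriv x t ≤ -1 := by
      intro t ht
      have h1 := hT t ht
      rw [div_le_iff₀ hLpos] at h1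
      have h2 : (⨅ s, x s) ≤ x t := ciInf_le hbdd t
      have h3 := hX t
      have hxt := hx t
      nlinarith [mul_le_mul_of_nonneg_left h2 (hy t).le, sq_nonneg (x t), hy t]
    have hanti2 : AntitoneOn (fun s => x s + s) (Set.Ici T) := by
      apply antitoneOn_of_deriv_nonpos (convex_Ici T)
      · exact (hdx.continuous.add continuous_id).continuousOn
      · exact fun s _ => ((hdx s).add (differentiable_id s)).differentiableWithinAt
      · intro s hs
        rw [interior_Ici] at hs
        rw [HasDerivAt.deriv (f := fun s => x s + s) ((hdx s).hasDerivAt.add (hasDerivAt_id' s))]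
        linarith [hd1 s (le_of_lt hs)]
    have hxT := (hx T).1
    have h5 := hanti2 Set.self_mem_Ici (Set.mem_Ici.2 (by linarith : T ≤ x T + T + 1))
      (by linarith : T ≤ x T + T + 1)
    simp only [id_eq] at h5
    have := (hx (x T + T + 1)).1
    linarith
  have hxlim : Tendsto x atTop (nhds 0) := hL0 ▸ hxInf
  have hwdiff : Differentiable ℝ (fun s => x s * y s - (m - 1) * (1 - m * ρ) * (1 - x s ^ 2)) :=
    (hdx.mul hdy).sub (((differentiable_const (1:ℝ)).sub (hdx.pow 2)).const_mul _)
  have hwlim : Tendsto (fun s => x s * y s - (m - 1) * (1 - m * ρ) * (1 - x s ^ 2)) atTop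
      (nhds 0) := by
    apply tendsto_zero_of_deriv_le_aux hwdiff hwpos
    intro ε hε
    have hb : (0:ℝ) < ε / ((m - 1) * (1 - 2 * m * ρ)) := div_pos hε (by nlinarith)
    obtain ⟨T, hT⟩ := eventually_atTop.1
      ((hytop.eventually_ge_atTop ((1 - 2 * m * ρ) +
        |2 * ((m - 1) * (1 - m * ρ)) - (1 + m - 4 * m * ρ)|)).and
        (hxlim.eventually_lt_const hb))
    refine ⟨T, fun t ht => ?_⟩
    obtain ⟨hy1, hx1⟩ := hT t ht
    have hxt := hx t
    have hcb : -(|2 * ((m - 1) * (1 - m * ρ)) - (1 + m - 4 * m * ρ)|) ≤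
        (2 * ((m - 1) * (1 - m * ρ)) - (1 + m - 4 * m * ρ)) * x t := by
      nlinarith [neg_abs_le (2 * ((m - 1) * (1 - m * ρ)) - (1 + m - 4 * m * ρ)),
        abs_nonneg (2 * ((m - 1) * (1 - m * ρ)) - (1 + m - 4 * m * ρ)), hxt.1, hxt.2]
    have hge : (1 - 2 * m * ρ) ≤
        y t + (2 * ((m - 1) * (1 - m * ρ)) - (1 + m - 4 * m * ρ)) * x t := by linarith
    apply le_of_mul_le_mul_left _ hE
    rw [keyw t]
    have hA1 : (1 - 2 * m * ρ) * (x t * y t - (m - 1) * (1 - m * ρ) * (1 - x t ^ 2)) ≤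
        (y t + (2 * ((m - 1) * (1 - m * ρ)) - (1 + m - 4 * m * ρ)) * x t) *
          (x t * y t - (m - 1) * (1 - m * ρ) * (1 - x t ^ 2)) :=
      mul_le_mul_of_nonneg_right hge (hwpos t).le
    have hmE : (0:ℝ) < (m - 1) * (1 - 2 * m * ρ) := mul_pos (by linarith) hE
    rw [lt_div_iff₀ hmE] at hx1
    have hstep : (m - 1) * (1 - 2 * m * ρ) * (x t * (1 - x t ^ 2)) ≤ ε := by
      nlinarith [mul_nonneg (mul_nonneg hmE.le hxt.1.le) (sq_nonneg (x t))]
    have hA2 : (m - 1) * (1 - 2 * m * ρ) ^ 2 * (x t * (1 - x t ^ 2)) ≤ (1 - 2 * m * ρ) * ε := by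
      have := mul_le_mul_of_nonneg_left hstep hE.le
      nlinarith [this]
    linarith [hA1, hA2]
  constructor
  · have h1 : Tendsto (fun t => (x t * y t - (m - 1) * (1 - m * ρ) * (1 - x t ^ 2))
        + (m - 1) * (1 - m * ρ) * (1 - x t ^ 2)) atTop
        (nhds (0 + (m - 1) * (1 - m * ρ) * (1 - 0 ^ 2))) :=
      hwlim.add (tendsto_const_nhds.mul (tendsto_const_nhds.sub (hxlim.pow 2)))
    have hval : (0:ℝ) + (m - 1) * (1 - m * ρ) * (1 - 0 ^ 2)
        = ((n:ℝ) - 2) * (1 - ((n:ℝ) - 1) * ρ) := by rw [hm]; ring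
    rw [hval] at h1
    exact h1.congr fun t => by ring
  · have h2t : Tendsto (fun t => ((1 + m - 4 * m * ρ) *
        (x t * y t - (m - 1) * (1 - m * ρ) * (1 - x t ^ 2))
        + (m - 1) * (1 - 2 * m * ρ) ^ 2 * (1 - x t ^ 2)) / (1 - 2 * m * ρ)) atTop
        (nhds (((1 + m - 4 * m * ρ) * 0 + (m - 1) * (1 - 2 * m * ρ) ^ 2 * (1 - 0 ^ 2))
          / (1 - 2 * m * ρ))) :=
      ((tendsto_const_nhds.mul hwlim).add
        (tendsto_const_nhds.mul (tendsto_const_nhds.sub (hxlim.pow 2)))).div_const (1 - 2 * m * ρ)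
    have hval2 : ((1 + m - 4 * m * ρ) * 0 + (m - 1) * (1 - 2 * m * ρ) ^ 2 * (1 - 0 ^ 2))
        / (1 - 2 * m * ρ) = ((n:ℝ) - 2) * (1 - 2 * ((n:ℝ) - 1) * ρ) := by
      rw [div_eq_iff hE.ne', hm]; ring
    rw [hval2] at h2t
    exact h2t.congr fun t => (keyy t).symm
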